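/- Let d ≥ 2 and let 1 ≤ n₁ ≤ ... ≤ n_k < d be integers such that Σᵢ nᵢ is even and Σᵢ nᵢ ≥ 2d − 2. Then there exist permutations α₁,...,α_k ∈ S_d such that each αᵢ is an (nᵢ+1)-cycle, α₁α₂⋯α_k = id, and the subgroup generated by the αᵢ acts transitively on {1,...,d}. -/

import Mathlib

open Equiv

set_option linter.unusedSectionVars false
set_option linter.unusedVariables false

namespace HurAux

open Equiv.Perm List
open Fin.NatCast

variable {d : ℕ}




def clo (L : List (Perm (Fin d))) : Subgroup (Perm (Fin d)) :=
  Subgroup.closure {g | g ∈ L}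

def Reach (L : List (Perm (Fin d))) (x y : Fin d) : Prop :=
  ∃ σ ∈ clo L, σ x = y

lemma reach_refl (L : List (Perm (Fin d))) (x : Fin d) : Reach L x x :=
  ⟨1, (clo L).one_mem, rfl⟩

lemma reach_symm {L : List (Perm (Fin d))} {x y : Fin d} (h : Reach L x y) : Reach L y x := by
  obtain ⟨σ, hσ, rfl⟩ := h
  exact ⟨σ⁻¹, (clo L).inv_mem hσ, by simp⟩

lemma reach_trans {L : List (Perm (Fin d))} {x y z : Fin d}
    (h : Reach L x y) (h' : Reach L y z) : Reach L x z := by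
  obtain ⟨σ, hσ, rfl⟩ := h
  obtain ⟨τ, hτ, rfl⟩ := h'
  exact ⟨τ * σ, (clo L).mul_mem hτ hσ, rfl⟩

lemma reach_of_cycle {L : List (Perm (Fin d))} {g : Perm (Fin d)} (hgL : g ∈ L)
    (hc : g.IsCycle) {x y : Fin d} (hx : g x ≠ x) (hy : g y ≠ y) : Reach L x y := by
  obtain ⟨i, hi⟩ := hc.exists_pow_eq hx hy
  exact ⟨g ^ i, (clo L).pow_mem (Subgroup.subset_closure hgL) i, hi⟩

lemma reach_mono {L₁ L₂ : List (Perm (Fin d))}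
    (h : ∀ g ∈ L₁, ∀ x : Fin d, Reach L₂ x (g x)) :
    ∀ σ ∈ clo L₁, ∀ x : Fin d, Reach L₂ x (σ x) := by
  intro σ hσ
  induction hσ using Subgroup.closure_induction with
  | mem g hg => exact h g hg
  | one => intro x; exact reach_refl _ _
  | mul σ τ hσ hτ ihσ ihτ =>
      intro x
      exact reach_trans (ihτ x) (by simpa using ihσ (τ x))
  | inv σ hσ ihσ =>
      intro x
      have := ihσ (σ⁻¹ x)
      simp only [Equiv.Perm.coe_inv, Equiv.apply_symm_apply] at this
      simpa using reach_symm this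

lemma reach_upgrade {L₁ L₂ : List (Perm (Fin d))}
    (h : ∀ g ∈ L₁, ∃ g' , g' ∈ L₂ ∧ g'.IsCycle ∧ g.support ⊆ g'.support)
    {x y : Fin d} (hxy : Reach L₁ x y) : Reach L₂ x y := by
  obtain ⟨σ, hσ, rfl⟩ := hxy
  refine reach_mono ?_ σ hσ x
  intro g hg z
  by_cases hz : g z = z
  · rw [hz]; exact reach_refl _ _
  · obtain ⟨g', hg'L, hg'c, hsub⟩ := h g hg
    have hz1 : z ∈ g.support := mem_support.2 hz
    have hz2 : g z ∈ g.support := apply_mem_support.2 hz1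
    exact reach_of_cycle hg'L hg'c (mem_support.1 (hsub hz1)) (mem_support.1 (hsub hz2))


lemma clo_cons (g : Perm (Fin d)) (T : List (Perm (Fin d))) :
    clo (g :: T) = Subgroup.closure {g} ⊔ clo T := by
  rw [clo, clo, ← Subgroup.closure_union]
  congr 1
  ext h
  simp

lemma transfer {m : ℕ} {l₁ l₂ : List ℕ} (hp : l₁.Perm l₂) :
    ∀ L₁ : List (Perm (Fin d)), L₁.map (fun g => g.support.card) = l₁ →
    (∀ g ∈ L₁, g.IsCycle) → (∀ g ∈ L₁, ∀ x : Fin d, g x ≠ x → (x : ℕ) < m) →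
    ∃ L₂ : List (Perm (Fin d)), L₂.map (fun g => g.support.card) = l₂ ∧
      (∀ g ∈ L₂, g.IsCycle) ∧ (∀ g ∈ L₂, ∀ x : Fin d, g x ≠ x → (x : ℕ) < m) ∧
      L₂.prod = L₁.prod ∧ clo L₂ = clo L₁ := by
  induction hp with
  | nil =>
      intro L₁ hmap _ _
      exact ⟨L₁, by simpa using hmap, by simp_all, by simp_all, rfl, rfl⟩
  | cons x hp ih =>
      intro L₁ hmap hcyc hbd
      match L₁, hmap with
      | g :: T, hmap =>
        simp only [map_cons, cons.injEq] at hmap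
        obtain ⟨T₂, h1, h2, h3, h4, h5⟩ := ih T hmap.2 (fun g hg => hcyc g (mem_cons_of_mem _ hg))
          (fun g hg => hbd g (mem_cons_of_mem _ hg))
        refine ⟨g :: T₂, by simp [h1, hmap.1], ?_, ?_, by simp [h4], ?_⟩
        · intro g' hg'
          rcases mem_cons.1 hg' with rfl | hg'
          · exact hcyc g' (mem_cons_self)
          · exact h2 g' hg'
        · intro g' hg'
          rcases mem_cons.1 hg' with rfl | hg'
          · exact hbd g' (mem_cons_self)
          · exact h3 g' hg'
        · rw [clo_cons, clo_cons, h5]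
  | swap x y l =>
      intro L₁ hmap hcyc hbd
      match L₁, hmap with
      | g :: h :: T, hmap =>
        simp only [map_cons, cons.injEq] at hmap
        obtain ⟨hg1, hh1, hT1⟩ := hmap
        have hgm : g ∈ g :: h :: T := mem_cons_self
        have hhm : h ∈ g :: h :: T := mem_cons_of_mem _ (mem_cons_self)
        refine ⟨(g * h * g⁻¹) :: g :: T, ?_, ?_, ?_, ?_, ?_⟩
        · simp only [map_cons, cons.injEq]
          refine ⟨?_, hg1, hT1⟩
          rw [card_support_conj]; exact hh1
        · intro g' hg'
          rcases mem_cons.1 hg' with rfl | hg'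
          · exact (hcyc h hhm).conj
          · rcases mem_cons.1 hg' with rfl | hg'
            · exact hcyc _ hgm
            · exact hcyc g' (mem_cons_of_mem _ (mem_cons_of_mem _ hg'))
        · intro g' hg'
          rcases mem_cons.1 hg' with rfl | hg'
          · intro z hz
            have hz' : h (g⁻¹ z) ≠ g⁻¹ z := by
              intro hcon
              apply hz
              simp only [Perm.mul_apply]
              rw [hcon]; simp
            by_cases hgz : g (g⁻¹ z) = g⁻¹ z
            · have : z = g⁻¹ z := by conv_lhs => rw [← Equiv.apply_symm_apply g z, ← Equiv.Perm.coe_inv]; rw [hgz]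
              rw [this]
              exact hbd h hhm _ hz'
            · have : g⁻¹ z ∈ g.support := mem_support.2 hgz
              have : g (g⁻¹ z) ∈ g.support := apply_mem_support.2 this
              simp only [Equiv.Perm.coe_inv, Equiv.apply_symm_apply] at this
              exact hbd g hgm z (mem_support.1 this)
          · rcases mem_cons.1 hg' with rfl | hg'
            · exact hbd _ hgm
            · exact hbd g' (mem_cons_of_mem _ (mem_cons_of_mem _ hg'))
        · simp [mul_assoc]
        · have e1 : clo ((g * h * g⁻¹) :: g :: T) ≤ clo (g :: h :: T) := by
            show Subgroup.closure _ ≤ _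
            apply (Subgroup.closure_le _).2
            intro g' hg'
            simp only [Set.mem_setOf_eq, mem_cons] at hg'
            rcases hg' with rfl | rfl | hg'
            · exact mul_mem (mul_mem (Subgroup.subset_closure hgm)
                (Subgroup.subset_closure hhm)) (inv_mem (Subgroup.subset_closure hgm))
            · exact Subgroup.subset_closure hgm
            · exact Subgroup.subset_closure (show g' ∈ _ from mem_cons_of_mem _ (mem_cons_of_mem _ hg'))
          have e2 : clo (g :: h :: T) ≤ clo ((g * h * g⁻¹) :: g :: T) := by
            show Subgroup.closure _ ≤ _
            apply (Subgroup.closure_le _).2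
            intro g' hg'
            simp only [Set.mem_setOf_eq, mem_cons] at hg'
            have m1 : g * h * g⁻¹ ∈ clo ((g * h * g⁻¹) :: g :: T) :=
              Subgroup.subset_closure (mem_cons_self)
            have m2 : g ∈ clo ((g * h * g⁻¹) :: g :: T) :=
              Subgroup.subset_closure (mem_cons_of_mem _ (mem_cons_self))
            rcases hg' with rfl | rfl | hg'
            · exact m2
            · have hx : g⁻¹ * (g * g' * g⁻¹) * g ∈ clo ((g * g' * g⁻¹) :: g :: T) :=
                mul_mem (mul_mem (inv_mem m2) m1) m2
              have he : g⁻¹ * (g * g' * g⁻¹) * g = g' := by group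
              rw [he] at hx
              exact hx
            · exact Subgroup.subset_closure (mem_cons_of_mem _ (mem_cons_of_mem _ hg'))
          exact le_antisymm e1 e2
  | trans hp₁ hp₂ ih₁ ih₂ =>
      intro L₁ hmap hcyc hbd
      obtain ⟨L₂, h1, h2, h3, h4, h5⟩ := ih₁ L₁ hmap hcyc hbd
      obtain ⟨L₃, g1, g2, g3, g4, g5⟩ := ih₂ L₂ h1 h2 h3
      exact ⟨L₃, g1, g2, g3, g4.trans h4, g5.trans h5⟩


lemma formPerm_cons_eq_mul_swap {l : List (Fin d)} (hne : l ≠ []) {p : Fin d} (hp : p ∉ l) :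
    formPerm (p :: l) = formPerm l * swap (l.getLast hne) p := by
  obtain ⟨a, t, rfl⟩ : ∃ a t, l = a :: t := ⟨l.head hne, l.tail, (List.cons_head_tail hne).symm⟩
  rw [formPerm_cons_cons, mul_swap_eq_swap_mul]
  congr 1
  · rw [formPerm_apply_getLast, formPerm_apply_of_notMem hp]
    exact Equiv.swap_comm _ _

lemma toList_facts {g : Perm (Fin d)} (hg : g.IsCycle) {a : Fin d} (ha : g a ≠ a) :
    ∃ (lg : List (Fin d)) (hne : lg ≠ []), lg.Nodup ∧ 2 ≤ lg.length ∧
      lg.length = g.support.card ∧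
      formPerm lg = g ∧ (∀ z, z ∈ lg ↔ g z ≠ z) ∧
      lg.getLast hne = a := by
  have hga : g (g a) ≠ g a := by
    have : g a ∈ g.support := apply_mem_support.2 (mem_support.2 ha)
    exact mem_support.1 this
  have hcyc : g.cycleOf (g a) = g := hg.cycleOf_eq hga
  refine ⟨g.toList (g a), ?_, nodup_toList _ _, ?_, ?_, ?_, ?_, ?_⟩
  · rw [← List.length_pos_iff_ne_nil, length_toList, hcyc]
    exact lt_of_lt_of_le two_pos hg.two_le_card_support
  · rw [length_toList, hcyc]; exact hg.two_le_card_support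
  · rw [length_toList, hcyc]
  · rw [formPerm_toList, hcyc]
  · intro z
    constructor
    · intro hz
      obtain ⟨⟨i, hi⟩, hmem⟩ := mem_toList_iff.1 hz
      have : z ∈ g.support := by
        rw [← hi]; exact zpow_apply_mem_support.2 hmem
      exact mem_support.1 this
    · intro hz
      exact mem_toList_iff.2 ⟨hg.sameCycle hga hz, mem_support.2 hga⟩
  · have hlen : g.toList (g a) ≠ [] := by
      rw [← List.length_pos_iff_ne_nil, length_toList, hcyc]
      exact lt_of_lt_of_le two_pos hg.two_le_card_support
    have h1 : 0 < (g.toList (g a)).length := List.length_pos_iff_ne_nil.2 hlen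
    rw [List.getLast_eq_getElem]
    have h2' := getElem_toList g (g a) ((g.toList (g a)).length - 1) (by omega)
    rw [h2']
    have hord : (g ^ ((g.toList (g a)).length - 1)) (g a) = (g ^ (g.toList (g a)).length) a := by
      have : (g ^ ((g.toList (g a)).length - 1)) * g = g ^ (g.toList (g a)).length := by
        rw [← pow_succ]
        congr 1
        omega
      rw [← this]; rfl
    rw [hord, length_toList, hcyc, ← hg.orderOf, pow_orderOf_eq_one]
    rfl

lemma toList_facts_head {g : Perm (Fin d)} (hg : g.IsCycle) {a : Fin d} (ha : g a ≠ a) :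
    ∃ (t : List (Fin d)), (a :: t).Nodup ∧ 2 ≤ (a :: t).length ∧
      (a :: t).length = g.support.card ∧
      formPerm (a :: t) = g ∧ (∀ z, z ∈ (a :: t) ↔ g z ≠ z) := by
  have hcyc : g.cycleOf a = g := hg.cycleOf_eq ha
  have hlen : 0 < (g.toList a).length := by
    rw [length_toList, hcyc]
    exact lt_of_lt_of_le two_pos hg.two_le_card_support
  have hhead : g.toList a = a :: (g.toList a).tail := by
    have h0 : (g.toList a).get ⟨0, hlen⟩ = a := by
      rw [List.get_eq_getElem, getElem_toList]; simp
    conv_lhs => rw [← List.cons_head_tail (List.length_pos_iff_ne_nil.1 hlen)]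
    congr 1
    rw [List.head_eq_getElem_zero]
    simp only [List.get_eq_getElem] at h0
    exact h0
  refine ⟨(g.toList a).tail, ?_, ?_, ?_, ?_, ?_⟩
  · rw [← hhead]; exact nodup_toList _ _
  · rw [← hhead, length_toList, hcyc]; exact hg.two_le_card_support
  · rw [← hhead, length_toList, hcyc]
  · rw [← hhead, formPerm_toList, hcyc]
  · intro z
    rw [← hhead]
    constructor
    · intro hz
      obtain ⟨⟨i, hi⟩, hmem⟩ := mem_toList_iff.1 hz
      have : z ∈ g.support := by
        rw [← hi]; exact zpow_apply_mem_support.2 hmem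
      exact mem_support.1 this
    · intro hz
      exact mem_toList_iff.2 ⟨hg.sameCycle ha hz, mem_support.2 ha⟩

lemma ins_right {g : Perm (Fin d)} (hg : g.IsCycle) {a y : Fin d}
    (ha : g a ≠ a) (hy : g y = y) :
    (g * swap a y).IsCycle ∧ (g * swap a y).support = insert y g.support := by
  obtain ⟨lg, hne, hnd, h2, hlen, hform, hmem, hlast⟩ := toList_facts hg ha
  have hyl : y ∉ lg := fun h => (hmem y).1 h hy
  have key : formPerm (y :: lg) = g * swap a y := by
    rw [formPerm_cons_eq_mul_swap hne hyl, hform, hlast]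
  have hnd2 : (y :: lg).Nodup := by simp [hnd, hyl]
  have hlen2 : 2 ≤ (y :: lg).length := by simp; omega
  constructor
  · rw [← key]; exact isCycle_formPerm hnd2 hlen2
  · rw [← key, support_formPerm_of_nodup _ hnd2]
    · rw [List.toFinset_cons]
      congr 1
      ext z
      rw [List.mem_toFinset, hmem z, mem_support]
    · intro x hx
      rw [hx] at hlen2
      simp at hlen2

lemma ins_left {g : Perm (Fin d)} (hg : g.IsCycle) {a y : Fin d}
    (ha : g a ≠ a) (hy : g y = y) :
    (swap a y * g).IsCycle ∧ (swap a y * g).support = insert y g.support := by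
  obtain ⟨t, hnd, h2, hlen, hform, hmem⟩ := toList_facts_head hg ha
  have hyl : y ∉ (a :: t) := fun h => (hmem y).1 h hy
  have key : formPerm (y :: a :: t) = swap a y * g := by
    rw [formPerm_cons_cons, hform, Equiv.swap_comm]
  have hnd2 : (y :: a :: t).Nodup := by simp_all
  have hlen2 : 2 ≤ (y :: a :: t).length := by simp
  constructor
  · rw [← key]; exact isCycle_formPerm hnd2 hlen2
  · rw [← key, support_formPerm_of_nodup _ hnd2]
    · rw [List.toFinset_cons]
      congr 1
      ext z
      rw [List.mem_toFinset, hmem z, mem_support]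
    · intro x hx
      rw [hx] at hlen2
      simp at hlen2

lemma formPerm_split (l₁ l₂ : List (Fin d)) (x : Fin d) :
    formPerm (l₁ ++ x :: l₂) = formPerm (l₁ ++ [x]) * formPerm (x :: l₂) := by
  induction l₁ with
  | nil => simp
  | cons a t ih =>
      cases t with
      | nil =>
          rw [singleton_append, singleton_append, formPerm_cons_cons, formPerm_pair]
      | cons b t' =>
          simp only [cons_append] at ih ⊢
          rw [formPerm_cons_cons, formPerm_cons_cons, ih, mul_assoc]


section WithNeZero
variable [NeZero d]

def natsTo (t : ℕ) : List (Fin d) := List.map Nat.cast (List.range t)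

lemma natsTo_length (t : ℕ) : (natsTo (d := d) t).length = t := by
  rw [natsTo, List.length_map, List.length_range]

lemma mem_natsTo {t : ℕ} (ht : t ≤ d) {z : Fin d} : z ∈ natsTo (d := d) t ↔ (z : ℕ) < t := by
  rw [natsTo, List.mem_map]
  constructor
  · rintro ⟨i, hi, rfl⟩
    rw [List.mem_range] at hi
    rwa [Fin.val_cast_of_lt (by omega)]
  · intro hz
    exact ⟨(z : ℕ), List.mem_range.2 hz, Fin.cast_val_eq_self z⟩

lemma natsTo_nodup {t : ℕ} (ht : t ≤ d) : (natsTo (d := d) t).Nodup := by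
  refine List.Nodup.map_on ?_ (List.nodup_range)
  intro i hi j hj hij
  rw [List.mem_range] at hi hj
  have : ((i : Fin d) : ℕ) = ((j : Fin d) : ℕ) := by rw [hij]
  rwa [Fin.val_cast_of_lt (by omega), Fin.val_cast_of_lt (by omega)] at this

lemma natsTo_succ (t : ℕ) : natsTo (d := d) (t + 1) = natsTo t ++ [(t : Fin d)] := by
  rw [natsTo, natsTo, List.range_succ, List.map_append, List.map_singleton]

lemma natsTo_one : natsTo (d := d) 1 = [(0 : Fin d)] := by
  rw [natsTo]
  simp [List.range_succ]

lemma natsTo_head {t : ℕ} (ht : 0 < t) (h : natsTo (d := d) t ≠ []) :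
    (natsTo (d := d) t).head h = 0 := by
  rw [List.head_eq_getElem_zero]
  have h0 : 0 < (List.range t).length := by rwa [List.length_range]
  simp only [natsTo, List.getElem_map, List.getElem_range, Nat.cast_zero]

lemma formPerm_cons_head {A : List (Fin d)} (h : A ≠ []) (x : Fin d) :
    formPerm (x :: A) = swap x (A.head h) * formPerm A := by
  obtain ⟨a, t, rfl⟩ : ∃ a t, A = a :: t := ⟨A.head h, A.tail, (List.cons_head_tail h).symm⟩
  rw [formPerm_cons_cons]
  rfl

lemma formPerm_natsTo_succ {t : ℕ} (ht : 1 ≤ t) (htd : t + 1 ≤ d) :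
    formPerm (natsTo (d := d) (t + 1)) = swap ((t : ℕ) : Fin d) 0 * formPerm (natsTo t) := by
  have hnd : (natsTo (d := d) (t+1)).Nodup := natsTo_nodup htd
  have hne : natsTo (d := d) t ≠ [] := by
    rw [← List.length_pos_iff_ne_nil, natsTo_length]; omega
  have hrot := formPerm_rotate (natsTo (d := d) (t+1)) hnd t
  rw [natsTo_succ] at hrot
  have hlen : (natsTo (d := d) t).length = t := natsTo_length t
  have hdrop : (natsTo (d := d) t ++ [((t : ℕ) : Fin d)]).rotate t
      = ((t : ℕ) : Fin d) :: natsTo t := by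
    rw [List.rotate_eq_drop_append_take (by simp [hlen])]
    rw [List.drop_left' hlen, List.take_left' hlen]
    rfl
  rw [hdrop] at hrot
  rw [natsTo_succ, ← hrot, formPerm_cons_head hne, natsTo_head (by omega)]

def stars (c : ℕ) : List (Perm (Fin d)) :=
  (List.range c).map (fun i => swap (0 : Fin d) (((i+1 : ℕ)) : Fin d))

lemma stars_succ (c : ℕ) :
    stars (d := d) (c+1) = stars c ++ [Equiv.swap (0 : Fin d) (((c+1 : ℕ)) : Fin d)] := by
  rw [stars, stars, List.range_succ, List.map_append, List.map_singleton]

lemma star_cancel : ∀ c : ℕ, 1 ≤ c → c + 1 ≤ d →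
    formPerm (natsTo (d := d) (c + 1)) * (stars c).prod = 1 := by
  intro c
  induction c with
  | zero => omega
  | succ c ih =>
      intro _ hcd
      by_cases hc : c = 0
      · subst hc
        rw [formPerm_natsTo_succ (le_refl 1) hcd, natsTo_one, formPerm_singleton, mul_one]
        have hst : stars (d := d) 1 = [swap (0 : Fin d) ((1 : ℕ) : Fin d)] := by
          rw [stars]
          simp [List.range_succ]
        rw [hst, List.prod_singleton, Equiv.swap_comm, swap_mul_self]
      · have hc1 : 1 ≤ c := by omega
        have hcd' : c + 1 ≤ d := by omega
        rw [formPerm_natsTo_succ (by omega) hcd, stars_succ, List.prod_append,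
          List.prod_singleton]
        have assoc : Equiv.swap (((c+1:ℕ)) : Fin d) 0 * formPerm (natsTo (d := d) (c+1)) *
            ((stars c).prod * Equiv.swap (0 : Fin d) (((c+1:ℕ)) : Fin d))
            = Equiv.swap (((c+1:ℕ)) : Fin d) 0 *
              (formPerm (natsTo (d := d) (c+1)) * (stars c).prod) *
              Equiv.swap (0 : Fin d) (((c+1:ℕ)) : Fin d) := by
          group
        rw [assoc, ih hc1 hcd', mul_one, Equiv.swap_comm, swap_mul_self]

def pairList : List (Fin d) → List (Perm (Fin d))
  | [] => []
  | j :: t => swap 0 j :: swap 0 j :: pairList t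

lemma pairList_prod (js : List (Fin d)) : (pairList js).prod = 1 := by
  induction js with
  | nil => rfl
  | cons j t ih => simp [pairList, ih, ← mul_assoc]

lemma pairList_length (js : List (Fin d)) : (pairList js).length = 2 * js.length := by
  induction js with
  | nil => rfl
  | cons j t ih => simp [pairList, ih]; omega

lemma pairList_mem {js : List (Fin d)} {g : Perm (Fin d)} (hg : g ∈ pairList js) :
    ∃ j ∈ js, g = swap 0 j := by
  induction js with
  | nil => simp [pairList] at hg
  | cons j t ih =>
      simp only [pairList, List.mem_cons] at hg
      rcases hg with rfl | rfl | hg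
      · exact ⟨j, by simp, rfl⟩
      · exact ⟨j, by simp, rfl⟩
      · obtain ⟨j', hj', rfl⟩ := ih hg
        exact ⟨j', by simp [hj'], rfl⟩

end WithNeZero

def Sol (m : ℕ) (l : List ℕ) : Prop :=
  ∃ L : List (Perm (Fin d)), L.map (fun g => g.support.card) = l.map (· + 1) ∧
    (∀ g ∈ L, g.IsCycle) ∧ (∀ g ∈ L, ∀ x : Fin d, g x ≠ x → (x : ℕ) < m) ∧
    L.prod = 1 ∧ (∀ x y : Fin d, (x : ℕ) < m → (y : ℕ) < m → Reach L x y)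

lemma ne_singleton_of_length {α : Type*} {l : List α} (h : 2 ≤ l.length) :
    ∀ x : α, l ≠ [x] := by
  intro x hx
  rw [hx] at h
  simp at h

section WithNeZero2
variable [NeZero d]

lemma pairList_mem' {js : List (Fin d)} {j : Fin d} (hj : j ∈ js) :
    swap 0 j ∈ pairList js := by
  induction js with
  | nil => simp at hj
  | cons a t ih =>
      rcases List.mem_cons.1 hj with rfl | hj
      · simp [pairList]
      · simp [pairList, ih hj]

lemma mem_stars {g : Perm (Fin d)} {c : ℕ} (hg : g ∈ stars (d := d) c) :
    ∃ i, i < c ∧ g = swap (0 : Fin d) (((i + 1 : ℕ)) : Fin d) := by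
  obtain ⟨i, hi, rfl⟩ := List.mem_map.1 hg
  exact ⟨i, List.mem_range.1 hi, rfl⟩

lemma support_natsTo_formPerm {t : ℕ} (h2 : 2 ≤ t) (htd : t ≤ d) :
    (formPerm (natsTo (d := d) t)).support = (natsTo (d := d) t).toFinset ∧
    (formPerm (natsTo (d := d) t)).support.card = t ∧
    (formPerm (natsTo (d := d) t)).IsCycle := by
  have hnd := natsTo_nodup (d := d) htd
  have hlen : (natsTo (d := d) t).length = t := natsTo_length t
  have hlen2 : 2 ≤ (natsTo (d := d) t).length := by omega
  have hsupp := support_formPerm_of_nodup _ hnd (ne_singleton_of_length hlen2)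
  refine ⟨hsupp, ?_, isCycle_formPerm hnd hlen2⟩
  rw [hsupp, List.toFinset_card_of_nodup hnd, hlen]

lemma B1 (m c kk : ℕ) (hm : 2 ≤ m) (hmd : m ≤ d) (hc : 1 ≤ c) (hcm : c + 1 ≤ m)
    (heven : Even (kk + c)) (hge : 2 * m ≤ kk + c + 2) :
    Sol (d := d) m (c :: List.replicate kk 1) := by
  obtain ⟨D, hD⟩ : ∃ D, kk = c + 2 * ((m - 1 - c) + D) := by
    obtain ⟨s, hs⟩ := heven
    exact ⟨(kk - c) / 2 - (m - 1 - c), by omega⟩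
  set js : List (Fin d) := (List.map (fun i => (((c + 1 + i : ℕ)) : Fin d))
      (List.range (m - 1 - c))) ++ List.replicate D (((1 : ℕ)) : Fin d) with hjs
  have hjsprop : ∀ j ∈ js, 1 ≤ (j : ℕ) ∧ (j : ℕ) < m := by
    intro j hj
    rcases List.mem_append.1 hj with hj | hj
    · obtain ⟨i, hi, rfl⟩ := List.mem_map.1 hj
      rw [List.mem_range] at hi
      rw [Fin.val_cast_of_lt (by omega)]
      omega
    · have := List.eq_of_mem_replicate hj
      subst this
      rw [Fin.val_cast_of_lt (by omega)]
      omega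
  have hjslen : js.length = (m - 1 - c) + D := by
    rw [hjs, List.length_append, List.length_map, List.length_range, List.length_replicate]
  have h2c : 2 ≤ c + 1 := by omega
  have hcd : c + 1 ≤ d := by omega
  obtain ⟨hCsupp, hCcard, hCcyc⟩ := support_natsTo_formPerm (t := c + 1) h2c hcd
  set C : Perm (Fin d) := formPerm (natsTo (c + 1)) with hC
  have hCmem : ∀ z : Fin d, z ∈ C.support ↔ (z : ℕ) < c + 1 := by
    intro z
    rw [hCsupp, List.mem_toFinset, mem_natsTo (by omega)]
  set L : List (Perm (Fin d)) := C :: (stars c ++ pairList js) with hL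
  have hswap : ∀ g ∈ stars c ++ pairList js,
      ∃ j : Fin d, 1 ≤ (j : ℕ) ∧ (j : ℕ) < m ∧ g = swap 0 j := by
    intro g hg
    rcases List.mem_append.1 hg with hg | hg
    · obtain ⟨i, hi, rfl⟩ := mem_stars hg
      refine ⟨(((i + 1 : ℕ)) : Fin d), ?_, ?_, rfl⟩
      · rw [Fin.val_cast_of_lt (by omega)]
        omega
      · rw [Fin.val_cast_of_lt (by omega)]
        omega
    · obtain ⟨j, hj, rfl⟩ := pairList_mem hg
      exact ⟨j, (hjsprop j hj).1, (hjsprop j hj).2, rfl⟩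
  have hswapcard : ∀ g ∈ stars c ++ pairList js, g.support.card = 2 ∧ g.IsCycle := by
    intro g hg
    obtain ⟨j, hj1, hjm, rfl⟩ := hswap g hg
    have hne : (0 : Fin d) ≠ j := by
      intro h
      rw [← h] at hj1
      simp at hj1
    exact ⟨card_support_swap hne, isCycle_swap hne⟩
  refine ⟨L, ?_, ?_, ?_, ?_, ?_⟩
  · rw [hL, List.map_cons, List.map_cons, List.map_replicate]
    refine List.cons_eq_cons.mpr ⟨hCcard, ?_⟩
    rw [List.eq_replicate_iff]
    constructor
    · rw [List.length_map, List.length_append, pairList_length, hjslen]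
      rw [stars, List.length_map, List.length_range]
      omega
    · intro b hb
      obtain ⟨g, hg, rfl⟩ := List.mem_map.1 hb
      exact (hswapcard g hg).1
  · intro g hg
    rcases List.mem_cons.1 hg with rfl | hg
    · exact hCcyc
    · exact (hswapcard g hg).2
  · intro g hg z hz
    rcases List.mem_cons.1 hg with rfl | hg
    · have : z ∈ C.support := mem_support.2 hz
      rw [hCmem] at this
      omega
    · obtain ⟨j, hj1, hjm, rfl⟩ := hswap g hg
      by_cases h0 : z = 0
      · subst h0; simp only [Fin.val_zero]; omega
      · by_cases hjz : z = j
        · subst hjz; omega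
        · exact absurd (swap_apply_of_ne_of_ne h0 hjz) hz
  · rw [hL, List.prod_cons, List.prod_append, pairList_prod, mul_one, ← List.prod_cons]
    rw [List.prod_cons]
    exact star_cancel c hc (by omega)
  · have hCL : C ∈ L := List.mem_cons_self
    have reach0 : ∀ x : Fin d, (x : ℕ) < m → Reach L x 0 := by
      intro x hx
      by_cases hxc : (x : ℕ) < c + 1
      · refine reach_of_cycle hCL hCcyc ?_ ?_
        · exact mem_support.1 ((hCmem x).2 hxc)
        · exact mem_support.1 ((hCmem 0).2 (by simp))
      · have hxj : x ∈ js := by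
          rw [hjs]
          refine List.mem_append.2 (Or.inl ?_)
          refine List.mem_map.2 ⟨(x : ℕ) - (c + 1), List.mem_range.2 (by omega), ?_⟩
          have : c + 1 + ((x : ℕ) - (c + 1)) = (x : ℕ) := by omega
          rw [this, Fin.cast_val_eq_self]
        have hmemL : swap 0 x ∈ L := by
          rw [hL]
          exact List.mem_cons_of_mem _ (List.mem_append.2 (Or.inr (pairList_mem' hxj)))
        exact ⟨swap 0 x, Subgroup.subset_closure hmemL, swap_apply_right 0 x⟩
    intro x y hx hy
    exact reach_trans (reach0 x hx) (reach_symm (reach0 y hy))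

lemma B2 (m : ℕ) (hm : 2 ≤ m) (hmd : m ≤ d) : Sol (d := d) m [m - 1, m - 1] := by
  obtain ⟨hCsupp, hCcard, hCcyc⟩ := support_natsTo_formPerm (t := m) hm hmd
  set C : Perm (Fin d) := formPerm (natsTo m) with hC
  have hCmem : ∀ z : Fin d, z ∈ C.support ↔ (z : ℕ) < m := by
    intro z
    rw [hCsupp, List.mem_toFinset, mem_natsTo hmd]
  refine ⟨[C, C⁻¹], ?_, ?_, ?_, ?_, ?_⟩
  · simp only [List.map_cons, List.map_nil, support_inv]
    rw [hCcard]
    have : m - 1 + 1 = m := by omega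
    rw [this]
  · intro g hg
    rcases List.mem_cons.1 hg with rfl | hg
    · exact hCcyc
    · rcases List.mem_cons.1 hg with rfl | hg
      · exact hCcyc.inv
      · simp at hg
  · intro g hg z hz
    have hzs : z ∈ C.support := by
      rcases List.mem_cons.1 hg with rfl | hg
      · exact mem_support.2 hz
      · rcases List.mem_cons.1 hg with rfl | hg
        · rw [← support_inv]; exact mem_support.2 hz
        · simp at hg
    rw [hCmem] at hzs
    exact hzs
  · simp
  · intro x y hx hy
    refine reach_of_cycle (List.mem_cons_self) hCcyc ?_ ?_
    · exact mem_support.1 ((hCmem x).2 hx)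
    · exact mem_support.1 ((hCmem y).2 hy)

end WithNeZero2

lemma split_cycle {C : Perm (Fin d)} (hC : C.IsCycle) (p q : ℕ) (hp : 1 ≤ p) (hq : 1 ≤ q)
    (hcard : C.support.card = p + q + 1) :
    ∃ g h : Perm (Fin d), g.IsCycle ∧ h.IsCycle ∧ g.support.card = p + 1 ∧
      h.support.card = q + 1 ∧ g * h = C ∧ g.support ⊆ C.support ∧ h.support ⊆ C.support := by
  have hCkeep := hC
  obtain ⟨x0, hx0, -⟩ := hCkeep
  obtain ⟨lc, hne, hnd, h2, hlen, hform, hmem, -⟩ := toList_facts hC hx0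
  have hlc_len : lc.length = p + q + 1 := by rw [hlen, hcard]
  have hplt : p < lc.length := by omega
  have hsplit : lc = lc.take p ++ lc[p] :: lc.drop (p + 1) := by
    conv_lhs => rw [← List.take_append_drop p lc]
    congr 1
    exact List.drop_eq_getElem_cons hplt
  have htake : lc.take p ++ [lc[p]] = lc.take (p + 1) := by
    rw [List.take_succ]
    congr 1
    rw [List.getElem?_eq_getElem hplt]
    rfl
  set g := formPerm (lc.take (p + 1)) with hgdef
  set h := formPerm (lc.drop p) with hhdef
  have hdrop_eq : lc.drop p = lc[p] :: lc.drop (p + 1) := List.drop_eq_getElem_cons hplt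
  have hgh : g * h = C := by
    rw [hgdef, hhdef, ← htake, hdrop_eq, ← formPerm_split, ← hsplit, hform]
  have hnd_take : (lc.take (p + 1)).Nodup := (List.take_sublist _ _).nodup hnd
  have hnd_drop : (lc.drop p).Nodup := (List.drop_sublist _ _).nodup hnd
  have hlen_take : (lc.take (p + 1)).length = p + 1 := by
    rw [List.length_take]; omega
  have hlen_drop : (lc.drop p).length = q + 1 := by
    rw [List.length_drop]; omega
  have hgc : g.IsCycle := isCycle_formPerm hnd_take (by omega)
  have hhc : h.IsCycle := isCycle_formPerm hnd_drop (by omega)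
  have hgsupp : g.support = (lc.take (p + 1)).toFinset :=
    support_formPerm_of_nodup _ hnd_take (ne_singleton_of_length (by omega))
  have hhsupp : h.support = (lc.drop p).toFinset :=
    support_formPerm_of_nodup _ hnd_drop (ne_singleton_of_length (by omega))
  refine ⟨g, h, hgc, hhc, ?_, ?_, hgh, ?_, ?_⟩
  · rw [hgsupp, List.toFinset_card_of_nodup hnd_take, hlen_take]
  · rw [hhsupp, List.toFinset_card_of_nodup hnd_drop, hlen_drop]
  · intro z hz
    rw [hgsupp, List.mem_toFinset] at hz
    have : z ∈ lc := (List.take_sublist _ _).mem hz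
    exact mem_support.2 ((hmem z).1 this)
  · intro z hz
    rw [hhsupp, List.mem_toFinset] at hz
    have : z ∈ lc := (List.drop_sublist _ _).mem hz
    exact mem_support.2 ((hmem z).1 this)

section WithNeZero3
variable [NeZero d]

lemma exists_fresh {m : ℕ} (hmd : m ≤ d) {s : Finset (Fin d)}
    (hs : ∀ z ∈ s, (z : ℕ) < m) (hcard : s.card < m) :
    ∃ y : Fin d, (y : ℕ) < m ∧ y ∉ s := by
  have hsub : s ⊆ (natsTo (d := d) m).toFinset := fun z hz =>
    List.mem_toFinset.2 ((mem_natsTo hmd).2 (hs z hz))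
  have hcardT : (natsTo (d := d) m).toFinset.card = m := by
    rw [List.toFinset_card_of_nodup (natsTo_nodup hmd), natsTo_length]
  have hpos : 0 < ((natsTo (d := d) m).toFinset \ s).card := by
    rw [Finset.card_sdiff_of_subset hsub, hcardT]; omega
  obtain ⟨y, hy⟩ := Finset.card_pos.1 hpos
  rw [Finset.mem_sdiff, List.mem_toFinset, mem_natsTo hmd] at hy
  exact ⟨y, hy.1, hy.2⟩

lemma exists_shared {m : ℕ} (hmd : m ≤ d) {s t : Finset (Fin d)}
    (hs : ∀ z ∈ s, (z : ℕ) < m) (ht : ∀ z ∈ t, (z : ℕ) < m)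
    (hcard : m < s.card + t.card) : ∃ a : Fin d, a ∈ s ∧ a ∈ t := by
  have hsub : s ∪ t ⊆ (natsTo (d := d) m).toFinset := by
    intro z hz
    rcases Finset.mem_union.1 hz with hz | hz
    · exact List.mem_toFinset.2 ((mem_natsTo hmd).2 (hs z hz))
    · exact List.mem_toFinset.2 ((mem_natsTo hmd).2 (ht z hz))
  have hcardT : (natsTo (d := d) m).toFinset.card = m := by
    rw [List.toFinset_card_of_nodup (natsTo_nodup hmd), natsTo_length]
  have hunion : (s ∪ t).card ≤ m := by
    rw [← hcardT]; exact Finset.card_le_card hsub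
  have := Finset.card_union_add_card_inter s t
  have hpos : 0 < (s ∩ t).card := by omega
  obtain ⟨a, ha⟩ := Finset.card_pos.1 hpos
  rw [Finset.mem_inter] at ha
  exact ⟨a, ha.1, ha.2⟩

/-- The double-insertion operation. -/
lemma op_ins {g h : Perm (Fin d)} (hg : g.IsCycle) (hh : h.IsCycle) {aa y : Fin d}
    (hins : (g aa ≠ aa ∧ g y = y ∧ h aa ≠ aa ∧ h y = y) ∨
            (g aa ≠ aa ∧ g y = y ∧ h aa = aa ∧ h y ≠ y)) :
    ∃ g' h' : Perm (Fin d), g'.IsCycle ∧ h'.IsCycle ∧ g' * h' = g * h ∧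
      g.support ⊆ g'.support ∧ h.support ⊆ h'.support ∧
      g'.support.card = g.support.card + 1 ∧ h'.support.card = h.support.card + 1 ∧
      (∀ z, g' z ≠ z → (g z ≠ z ∨ z = y ∨ z = aa)) ∧
      (∀ z, h' z ≠ z → (h z ≠ z ∨ z = y ∨ z = aa)) ∧ y ∈ g'.support := by
  have hprod : (g * swap aa y) * (swap aa y * h) = g * h := by
    have hh2 : g * swap aa y * (swap aa y * h) = g * (swap aa y * swap aa y) * h := by group
    rw [hh2, swap_mul_self, mul_one]
  refine ⟨g * swap aa y, swap aa y * h, ?_, ?_, hprod, ?_, ?_, ?_, ?_, ?_, ?_, ?_⟩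
  all_goals {
    rcases hins with ⟨h1, h2, h3, h4⟩ | ⟨h1, h2, h3, h4⟩
    · obtain ⟨hc1, hs1⟩ := ins_right hg h1 h2
      obtain ⟨hc2, hs2⟩ := ins_left hh h3 h4
      first
      | exact hc1
      | exact hc2
      | (rw [hs1]; exact Finset.subset_insert _ _)
      | (rw [hs2]; exact Finset.subset_insert _ _)
      | (rw [hs1]; exact Finset.card_insert_of_notMem (notMem_support.2 h2))
      | (rw [hs2]; exact Finset.card_insert_of_notMem (notMem_support.2 h4))
      | (intro z hz;
         have hz' := mem_support.2 hz;
         first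
         | (rw [hs1] at hz';
            rcases Finset.mem_insert.1 hz' with rfl | hz'
            · exact Or.inr (Or.inl rfl)
            · exact Or.inl (mem_support.1 hz'))
         | (rw [hs2] at hz';
            rcases Finset.mem_insert.1 hz' with rfl | hz'
            · exact Or.inr (Or.inl rfl)
            · exact Or.inl (mem_support.1 hz')))
      | (rw [hs1]; exact Finset.mem_insert_self _ _)
    · obtain ⟨hc1, hs1⟩ := ins_right hg h1 h2
      obtain ⟨hc2, hs2⟩ := ins_left hh h4 h3
      rw [Equiv.swap_comm y aa] at hs2 hc2
      first
      | exact hc1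
      | exact hc2
      | (rw [hs1]; exact Finset.subset_insert _ _)
      | (rw [hs2]; exact Finset.subset_insert _ _)
      | (rw [hs1]; exact Finset.card_insert_of_notMem (notMem_support.2 h2))
      | (rw [hs2]; exact Finset.card_insert_of_notMem (notMem_support.2 h3))
      | (intro z hz;
         have hz' := mem_support.2 hz;
         first
         | (rw [hs1] at hz';
            rcases Finset.mem_insert.1 hz' with rfl | hz'
            · exact Or.inr (Or.inl rfl)
            · exact Or.inl (mem_support.1 hz'))
         | (rw [hs2] at hz';
            rcases Finset.mem_insert.1 hz' with rfl | hz'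
            · exact Or.inr (Or.inr rfl)
            · exact Or.inl (mem_support.1 hz')))
      | (rw [hs1]; exact Finset.mem_insert_self _ _)
  }

end WithNeZero3

lemma sol_perm {m : ℕ} {l₁ l₂ : List ℕ} (hp : l₁.Perm l₂) (h : Sol (d := d) m l₁) :
    Sol (d := d) m l₂ := by
  obtain ⟨L, hmap, hcyc, hbd, hprod, htr⟩ := h
  obtain ⟨L₂, h1, h2, h3, h4, h5⟩ := transfer (m := m) (hp.map (· + 1)) L hmap hcyc hbd
  refine ⟨L₂, h1, h2, h3, by rw [h4, hprod], ?_⟩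
  intro x y hx hy
  obtain ⟨σ, hσ, hxy⟩ := htr x y hx hy
  exact ⟨σ, by rw [h5]; exact hσ, hxy⟩

section MainInd
variable [NeZero d]

lemma main_ind : ∀ N m : ℕ, ∀ l : List ℕ, l.sum + l.length ≤ N →
    2 ≤ m → m ≤ d → (∀ x ∈ l, 1 ≤ x ∧ x + 1 ≤ m) → Even l.sum → 2 * m ≤ l.sum + 2 →
    Sol (d := d) m l := by
  intro N
  induction N with
  | zero =>
      intro m l hN hm hmd hent heven hge
      exact absurd hm (by omega)
  | succ N ih =>
      intro m l hN hm hmd hent heven hge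
      set l' := l.insertionSort (· ≤ ·) with hl'def
      have hperm : l'.Perm l := List.perm_insertionSort _ l
      have hsorted : List.Pairwise (· ≤ ·) l' := List.pairwise_insertionSort _ l
      have hsum : l'.sum = l.sum := hperm.sum_eq
      have hlen : l'.length = l.length := hperm.length_eq
      have hent' : ∀ x ∈ l', 1 ≤ x ∧ x + 1 ≤ m := fun x hx => hent x (hperm.mem_iff.1 hx)
      have heven' : Even l'.sum := by rw [hsum]; exact heven
      have hge' : 2 * m ≤ l'.sum + 2 := by rw [hsum]; exact hge
      have hN' : l'.sum + l'.length ≤ N + 1 := by rw [hsum, hlen]; exact hN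
      clear_value l'
      refine sol_perm hperm ?_
      clear hl'def hN hge heven hent hsum hlen hperm
      rcases l' with _ | ⟨u, l''⟩
      · refine absurd hge' (by simp only [List.sum_nil]; omega)
      rcases l'' with _ | ⟨v, rest⟩
      · obtain ⟨hu1, hum⟩ := hent' u (by simp)
        refine absurd hge' (by simp only [List.sum_cons, List.sum_nil]; omega)
      obtain ⟨hu1, hum⟩ := hent' u (by simp)
      obtain ⟨hv1, hvm⟩ := hent' v (by simp)
      have huv : u ≤ v := (List.pairwise_cons.1 hsorted).1 v (by simp)
      by_cases hmerge : u + v + 1 ≤ m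
      · -- MERGE the two smallest
        have hseq : ((u + v) :: rest).sum = (u :: v :: rest).sum := by
          simp only [List.sum_cons]; omega
        have hcN : ((u + v) :: rest).sum + ((u + v) :: rest).length ≤ N := by
          rw [hseq]
          simp only [List.length_cons] at hN' ⊢
          omega
        have hcent : ∀ x ∈ (u + v) :: rest, 1 ≤ x ∧ x + 1 ≤ m := by
          intro x hx
          rcases List.mem_cons.1 hx with rfl | hx
          · omega
          · exact hent' x (by simp [hx])
        have hceven : Even ((u + v) :: rest).sum := by rw [hseq]; exact heven'
        have hcge : 2 * m ≤ ((u + v) :: rest).sum + 2 := by rw [hseq]; exact hge'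
        obtain ⟨L, hmap, hcyc, hbd, hprod, htr⟩ :=
          ih m ((u + v) :: rest) hcN hm hmd hcent hceven hcge
        rcases L with _ | ⟨C, T⟩
        · simp at hmap
        simp only [List.map_cons, List.cons.injEq] at hmap
        obtain ⟨hCcard, hTmap⟩ := hmap
        have hCcyc := hcyc C (List.mem_cons_self)
        obtain ⟨g, h, hgc, hhc, hgcard, hhcard, hgh, hgsub, hhsub⟩ :=
          split_cycle hCcyc u v hu1 hv1 (by rw [hCcard])
        refine ⟨g :: h :: T, ?_, ?_, ?_, ?_, ?_⟩
        · simp only [List.map_cons, List.cons.injEq]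
          exact ⟨hgcard, hhcard, hTmap⟩
        · intro g' hg'
          rcases List.mem_cons.1 hg' with rfl | hg'
          · exact hgc
          rcases List.mem_cons.1 hg' with rfl | hg'
          · exact hhc
          · exact hcyc _ (List.mem_cons_of_mem _ hg')
        · intro g' hg' z hz
          rcases List.mem_cons.1 hg' with rfl | hg'
          · exact hbd C (List.mem_cons_self) z
              (mem_support.1 (hgsub (mem_support.2 hz)))
          rcases List.mem_cons.1 hg' with rfl | hg'
          · exact hbd C (List.mem_cons_self) z
              (mem_support.1 (hhsub (mem_support.2 hz)))
          · exact hbd _ (List.mem_cons_of_mem _ hg') z hz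
        · simp only [List.prod_cons] at hprod ⊢
          rw [← mul_assoc, hgh]
          exact hprod
        · intro x y hx hy
          obtain ⟨σ, hσ, hxy⟩ := htr x y hx hy
          refine ⟨σ, ?_, hxy⟩
          have hle : clo (C :: T) ≤ clo (g :: h :: T) := by
            show Subgroup.closure _ ≤ _
            apply (Subgroup.closure_le _).2
            intro t ht
            simp only [Set.mem_setOf_eq, List.mem_cons] at ht
            rcases ht with rfl | ht
            · rw [← hgh]
              exact mul_mem (Subgroup.subset_closure (by simp))
                (Subgroup.subset_closure (by simp))
            · exact Subgroup.subset_closure (by simp [ht])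
          exact hle hσ
      · -- NOT mergeable : u + v ≥ m
        have huvm : m ≤ u + v := by omega
        by_cases hv2 : v < 2
        · -- m = 2 and everything is a 1
          have hm2 : m = 2 := by omega
          have hu : u = 1 := by omega
          have hv : v = 1 := by omega
          have hrest : rest = List.replicate rest.length 1 := by
            rw [List.eq_replicate_iff]
            refine ⟨rfl, ?_⟩
            intro b hb
            obtain ⟨hb1, hbm⟩ := hent' b (by simp [hb])
            omega
          have hall : u :: v :: rest = 1 :: List.replicate (rest.length + 1) 1 := by
            rw [hu, hv, List.replicate_succ, ← hrest]
          rw [hall]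
          apply B1 m 1 (rest.length + 1) hm hmd le_rfl (by omega)
          · have : (u :: v :: rest).sum = rest.length + 1 + 1 := by
              rw [hall, List.sum_cons, List.sum_replicate, smul_eq_mul, mul_one]
              omega
            rw [← this]; exact heven'
          · have : (u :: v :: rest).sum = rest.length + 1 + 1 := by
              rw [hall, List.sum_cons, List.sum_replicate, smul_eq_mul, mul_one]
              omega
            rw [← this]; exact hge'
        · have hv2' : 2 ≤ v := by omega
          rcases rest with _ | ⟨w, rest'⟩
          · -- exactly two entries : both must be m - 1
            have hsum2 : (u :: v :: ([] : List ℕ)).sum = u + v := by simp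
            have hu : u = m - 1 := by rw [hsum2] at hge'; omega
            have hv : v = m - 1 := by rw [hsum2] at hge'; omega
            rw [hu, hv]
            exact B2 m hm hmd
          · obtain ⟨hw1, hwm⟩ := hent' w (by simp)
            have hvw : v ≤ w :=
              (List.pairwise_cons.1 (List.pairwise_cons.1 hsorted).2).1 w (by simp)
            by_cases hbig : 2 * m ≤ (u :: v :: w :: rest').sum
            · -- OP1 : insert a point into the cycles for v and w
              have hcN : ((v-1) :: (w-1) :: u :: rest').sum + ((v-1) :: (w-1) :: u :: rest').length ≤ N := by
                simp only [List.sum_cons, List.length_cons] at hN' ⊢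
                omega
              have hcent : ∀ x ∈ (v-1) :: (w-1) :: u :: rest', 1 ≤ x ∧ x + 1 ≤ m := by
                intro x hx
                rcases List.mem_cons.1 hx with rfl | hx
                · omega
                rcases List.mem_cons.1 hx with rfl | hx
                · omega
                rcases List.mem_cons.1 hx with rfl | hx
                · omega
                · exact hent' x (by simp [hx])
              have hceven : Even ((v-1) :: (w-1) :: u :: rest').sum := by
                obtain ⟨s, hs⟩ := heven'
                simp only [List.sum_cons] at hs ⊢
                exact ⟨s - 1, by omega⟩
              have hcge : 2 * m ≤ ((v-1) :: (w-1) :: u :: rest').sum + 2 := by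
                simp only [List.sum_cons] at hbig ⊢
                omega
              obtain ⟨L, hmap, hcyc, hbd, hprod, htr⟩ :=
                ih m ((v-1) :: (w-1) :: u :: rest') hcN hm hmd hcent hceven hcge
              rcases L with _ | ⟨g, L1⟩
              · simp at hmap
              rcases L1 with _ | ⟨h, T⟩
              · simp at hmap
              simp only [List.map_cons, List.cons.injEq] at hmap
              obtain ⟨hgcard0, hhcard0, hTmap⟩ := hmap
              have hgcard : g.support.card = v := by omega
              have hhcard : h.support.card = w := by omega
              have hgc := hcyc g (by simp)
              have hhc := hcyc h (by simp)
              have hgbd : ∀ z ∈ g.support, (z : ℕ) < m :=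
                fun z hz => hbd g (by simp) z (mem_support.1 hz)
              have hhbd : ∀ z ∈ h.support, (z : ℕ) < m :=
                fun z hz => hbd h (by simp) z (mem_support.1 hz)
              have key : ∃ aa y : Fin d, (aa : ℕ) < m ∧ (y : ℕ) < m ∧
                  ((g aa ≠ aa ∧ g y = y ∧ h aa ≠ aa ∧ h y = y) ∨
                   (g aa ≠ aa ∧ g y = y ∧ h aa = aa ∧ h y ≠ y)) := by
                by_cases hsub1 : h.support ⊆ g.support
                · obtain ⟨aa, haa⟩ := Finset.card_pos.1 (show 0 < h.support.card by omega)
                  obtain ⟨y, hym, hyg⟩ := exists_fresh hmd hgbd (by omega)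
                  have hyh : y ∉ h.support := fun hy => hyg (hsub1 hy)
                  exact ⟨aa, y, hgbd aa (hsub1 haa), hym,
                    Or.inl ⟨mem_support.1 (hsub1 haa), notMem_support.1 hyg,
                      mem_support.1 haa, notMem_support.1 hyh⟩⟩
                · by_cases hsub2 : g.support ⊆ h.support
                  · obtain ⟨aa, haa⟩ := Finset.card_pos.1 (show 0 < g.support.card by omega)
                    obtain ⟨y, hym, hyh⟩ := exists_fresh hmd hhbd (by omega)
                    have hyg : y ∉ g.support := fun hy => hyh (hsub2 hy)
                    exact ⟨aa, y, hgbd aa haa, hym,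
                      Or.inl ⟨mem_support.1 haa, notMem_support.1 hyg,
                        mem_support.1 (hsub2 haa), notMem_support.1 hyh⟩⟩
                  · obtain ⟨aa, haag, haah⟩ := Finset.not_subset.1 hsub2
                    obtain ⟨y, hyh, hyg⟩ := Finset.not_subset.1 hsub1
                    exact ⟨aa, y, hgbd aa haag, hhbd y hyh,
                      Or.inr ⟨mem_support.1 haag, notMem_support.1 hyg,
                        notMem_support.1 haah, mem_support.1 hyh⟩⟩
              obtain ⟨aa, y, ham, hym, hins⟩ := key
              obtain ⟨g', h', hg'c, hh'c, hgh', hgsub, hhsub, hg'card, hh'card, hgmv, hhmv, -⟩ :=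
                op_ins hgc hhc hins
              refine sol_perm (List.perm_middle (l₁ := [v, w]) (l₂ := rest')) ?_
              refine ⟨g' :: h' :: T, ?_, ?_, ?_, ?_, ?_⟩
              · simp only [List.cons_append, List.nil_append, List.map_cons, List.map_nil] at hTmap ⊢
                rw [hg'card, hgcard, hh'card, hhcard, hTmap]
              · intro t ht
                rcases List.mem_cons.1 ht with rfl | ht
                · exact hg'c
                rcases List.mem_cons.1 ht with rfl | ht
                · exact hh'c
                · exact hcyc _ (by simp [ht])
              · intro t ht z hz
                rcases List.mem_cons.1 ht with rfl | ht
                · rcases hgmv z hz with h1 | rfl | rfl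
                  · exact hbd g (by simp) z h1
                  · exact hym
                  · exact ham
                rcases List.mem_cons.1 ht with rfl | ht
                · rcases hhmv z hz with h1 | rfl | rfl
                  · exact hbd h (by simp) z h1
                  · exact hym
                  · exact ham
                · exact hbd _ (by simp [ht]) z hz
              · simp only [List.prod_cons] at hprod ⊢
                rw [← mul_assoc, hgh', mul_assoc]
                exact hprod
              · intro x y' hx hy'
                refine reach_upgrade ?_ (htr x y' hx hy')
                intro t ht
                rcases List.mem_cons.1 ht with rfl | ht
                · exact ⟨g', by simp, hg'c, hgsub⟩
                rcases List.mem_cons.1 ht with rfl | ht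
                · exact ⟨h', by simp, hh'c, hhsub⟩
                · exact ⟨t, by simp [ht], hcyc _ (by simp [ht]), le_rfl⟩
            · -- OP2 : S = 2m - 2, reduce m
              rcases rest' with _ | ⟨w', rest''⟩
              swap
              · -- at least four entries : contradiction with S < 2m
                obtain ⟨hw'1, hw'm⟩ := hent' w' (by simp)
                have hww' : w ≤ w' :=
                  (List.pairwise_cons.1 (List.pairwise_cons.1 (List.pairwise_cons.1 hsorted).2).2).1 w' (by simp)
                refine absurd hbig (by push_neg; simp only [List.sum_cons]; push_neg at *; omega)
              -- the list is [u, v, w] and u+v+w = 2m-2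
              have hm3 : 3 ≤ m := by omega
              have hsumeq : u + v + w + 2 = 2 * m := by
                obtain ⟨s, hs⟩ := heven'
                simp only [List.sum_cons, List.sum_nil, add_zero] at hs hge' hbig
                omega
              have hcN : ((v-1) :: (w-1) :: [u]).sum + 3 ≤ N := by
                simp only [List.sum_cons, List.length_cons] at hN' ⊢
                simp only [List.sum_nil, List.sum_cons] at *
                omega
              have hcent : ∀ x ∈ (v-1) :: (w-1) :: [u], 1 ≤ x ∧ x + 1 ≤ m - 1 := by
                intro x hx
                rcases List.mem_cons.1 hx with rfl | hx
                · omega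
                rcases List.mem_cons.1 hx with rfl | hx
                · omega
                rcases List.mem_cons.1 hx with rfl | hx
                · omega
                · simp at hx
              have hceven : Even ((v-1) :: (w-1) :: [u]).sum := by
                simp only [List.sum_cons, List.sum_nil]
                exact ⟨m - 2, by omega⟩
              have hcge : 2 * (m - 1) ≤ ((v-1) :: (w-1) :: [u]).sum + 2 := by
                simp only [List.sum_cons, List.sum_nil]
                omega
              obtain ⟨L, hmap, hcyc, hbd, hprod, htr⟩ :=
                ih (m - 1) ((v-1) :: (w-1) :: [u]) (by simpa using hcN) (by omega) (by omega)
                  hcent hceven hcge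
              rcases L with _ | ⟨g, L1⟩
              · simp at hmap
              rcases L1 with _ | ⟨h, T⟩
              · simp at hmap
              simp only [List.map_cons, List.cons.injEq] at hmap
              obtain ⟨hgcard0, hhcard0, hTmap⟩ := hmap
              have hgcard : g.support.card = v := by omega
              have hhcard : h.support.card = w := by omega
              have hgc := hcyc g (by simp)
              have hhc := hcyc h (by simp)
              have hgbd : ∀ z ∈ g.support, (z : ℕ) < m - 1 :=
                fun z hz => hbd g (by simp) z (mem_support.1 hz)
              have hhbd : ∀ z ∈ h.support, (z : ℕ) < m - 1 :=
                fun z hz => hbd h (by simp) z (mem_support.1 hz)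
              obtain ⟨aa, haag, haah⟩ := exists_shared (m := m - 1) (by omega) hgbd hhbd
                (by rw [hgcard, hhcard]; omega)
              set q : Fin d := ((m - 1 : ℕ) : Fin d) with hqdef
              have hqval : (q : ℕ) = m - 1 := Fin.val_cast_of_lt (by omega)
              have hgq : g q = q := by
                by_contra hgq
                have := hbd g (by simp) q hgq
                omega
              have hhq : h q = q := by
                by_contra hhq
                have := hbd h (by simp) q hhq
                omega
              obtain ⟨g', h', hg'c, hh'c, hgh', hgsub, hhsub, hg'card, hh'card, hgmv, hhmv, hqg'⟩ :=
                op_ins hgc hhc (Or.inl ⟨mem_support.1 haag, hgq, mem_support.1 haah, hhq⟩)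
              refine sol_perm (List.perm_middle (l₁ := [v, w]) (l₂ := [])) ?_
              refine ⟨g' :: h' :: T, ?_, ?_, ?_, ?_, ?_⟩
              · simp only [List.cons_append, List.nil_append, List.map_cons, List.map_nil] at hTmap ⊢
                rw [hg'card, hgcard, hh'card, hhcard, hTmap]
              · intro t ht
                rcases List.mem_cons.1 ht with rfl | ht
                · exact hg'c
                rcases List.mem_cons.1 ht with rfl | ht
                · exact hh'c
                · exact hcyc _ (by simp [ht])
              · intro t ht z hz
                rcases List.mem_cons.1 ht with rfl | ht
                · rcases hgmv z hz with h1 | rfl | rfl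
                  · have := hbd g (by simp) z h1; omega
                  · omega
                  · have := hgbd _ haag; omega
                rcases List.mem_cons.1 ht with rfl | ht
                · rcases hhmv z hz with h1 | rfl | rfl
                  · have := hbd h (by simp) z h1; omega
                  · omega
                  · have := hgbd _ haag; omega
                · have := hbd _ (by simp [ht]) z hz; omega
              · simp only [List.prod_cons] at hprod ⊢
                rw [← mul_assoc, hgh', mul_assoc]
                exact hprod
              · have hup : ∀ t ∈ g :: h :: T, ∃ t', t' ∈ g' :: h' :: T ∧ t'.IsCycle ∧
                    t.support ⊆ t'.support := by
                  intro t ht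
                  rcases List.mem_cons.1 ht with rfl | ht
                  · exact ⟨g', by simp, hg'c, hgsub⟩
                  rcases List.mem_cons.1 ht with rfl | ht
                  · exact ⟨h', by simp, hh'c, hhsub⟩
                  · exact ⟨t, by simp [ht], hcyc _ (by simp [ht]), le_rfl⟩
                have tr0 : ∀ x : Fin d, (x : ℕ) < m → Reach (g' :: h' :: T) x aa := by
                  intro x hx
                  by_cases hx1 : (x : ℕ) < m - 1
                  · exact reach_upgrade hup (htr x aa hx1 (hgbd aa haag))
                  · have hxq : x = q := by
                      apply Fin.ext
                      rw [hqval]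
                      omega
                    subst hxq
                    refine reach_of_cycle (List.mem_cons_self) hg'c
                      (mem_support.1 hqg') (mem_support.1 (hgsub haag))
                intro x y hx hy
                exact reach_trans (tr0 x hx) (reach_symm (tr0 y hy))

end MainInd

end HurAux

theorem hurwitz_realization_single_cycles
    (d k : ℕ) (hd : 2 ≤ d)
    (n : Fin k → ℕ) (hmono : Monotone n)
    (h1 : ∀ i, 1 ≤ n i) (hlt : ∀ i, n i < d)
    (heven : Even (∑ i, n i)) (hsum : 2 * d - 2 ≤ ∑ i, n i) :
    ∃ α : Fin k → Perm (Fin d),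
      (∀ i, (α i).cycleType = {n i + 1}) ∧
      (List.ofFn α).prod = 1 ∧
      (∀ x y : Fin d, ∃ σ ∈ Subgroup.closure (Set.range α), σ x = y) := by
  haveI : NeZero d := ⟨by omega⟩
  have hsum' : (List.ofFn n).sum = ∑ i, n i := List.sum_ofFn
  have hent : ∀ x ∈ List.ofFn n, 1 ≤ x ∧ x + 1 ≤ d := by
    intro x hx
    rw [List.mem_ofFn] at hx
    obtain ⟨i, rfl⟩ := hx
    exact ⟨h1 i, hlt i⟩
  obtain ⟨L, hmap, hcyc, hbd, hprod, htr⟩ :=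
    HurAux.main_ind (d := d) ((List.ofFn n).sum + (List.ofFn n).length) d (List.ofFn n)
      le_rfl hd le_rfl hent (by rw [hsum']; exact heven) (by rw [hsum']; omega)
  have hlenL : L.length = k := by
    have := congrArg List.length hmap
    simpa using this
  set α : Fin k → Perm (Fin d) := fun i => L.get ⟨i.val, by rw [hlenL]; exact i.isLt⟩
    with hα
  have hofn : List.ofFn α = L := by
    apply List.ext_getElem
    · simp [hlenL]
    · intro i hi1 hi2
      simp only [List.getElem_ofFn, hα]
      rfl
  have hmem : ∀ i : Fin k, α i ∈ L := fun i => L.get_mem _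
  have hcards : ∀ i : Fin k, (α i).support.card = n i + 1 := by
    intro i
    have hi1 : i.val < (L.map (fun g => g.support.card)).length := by
      simp [hlenL]
    have hi2 : i.val < ((List.ofFn n).map (· + 1)).length := by simp
    have h := List.getElem_of_eq hmap hi1
    simpa [hα] using h
  refine ⟨α, ?_, ?_, ?_⟩
  · intro i
    have hc := hcyc (α i) (hmem i)
    rw [hc.cycleType, hcards i]
  · rw [hofn]; exact hprod
  · have hrange : Set.range α = {g | g ∈ L} := by
      ext g
      constructor
      · rintro ⟨i, rfl⟩
        exact hmem i
      · intro hg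
        obtain ⟨j, hj⟩ := List.mem_iff_get.1 hg
        exact ⟨⟨j.val, by rw [← hlenL]; exact j.isLt⟩, by simp only [hα]; exact hj⟩
    intro x y
    obtain ⟨σ, hσ, hxy⟩ := htr x y x.isLt y.isLt
    refine ⟨σ, ?_, hxy⟩
    rw [hrange]
    exact hσ
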